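/- The product of two monomial multi-quasisymmetric functions satisfies the recursion M_{(w_1,...,w_{n_1})} · M_{(u_1,...,u_{n_2})} = M_{(w_1, (w_2,...,w_{n_1}) * u)} + M_{(u_1, w * (u_2,...,u_{n_2}))} + M_{(w_1·u_1, (w_2,...,w_{n_1}) * (u_2,...,u_{n_2}))}, where w = (w_1,...,w_{n_1}), u = (u_1,...,u_{n_2}), * is the quasi-shuffle product on sequences, and M is extended linearly. -/

import Mathlib

open scoped Classical

/-- The quasi-shuffle product of two words over an alphabet `C` with a binary
operation `op`, with values in the free `k`-module on words. -/
noncomputable def qsh {k : Type*} [CommRing k] {C : Type*} (op : C → C → C) :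
    List C → List C → (List C →₀ k)
  | [], y => Finsupp.single y 1
  | x, [] => Finsupp.single x 1
  | a :: x, b :: y =>
      (qsh op x (b :: y)).mapDomain (a :: ·) + (qsh op (a :: x) y).mapDomain (b :: ·) +
        (qsh op x y).mapDomain (op a b :: ·)
  termination_by x y => x.length + y.length
  decreasing_by all_goals simp [List.length_cons] <;> omega

/-- The exponent of `x_j^w` for a formal monomial `w ∈ [m]^E`. -/
noncomputable def colExpE {E : Type*} [AddCommMonoid E] (m : ℕ)
    (w : Fin m → E) (j : ℕ+) : (Fin m × ℕ+) →₀ E :=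
  ∑ i : Fin m, Finsupp.single (i, j) (w i)

/-- The exponent of the monomial `x_{j_1}^{w_1} ⋯ x_{j_k}^{w_k}`. -/
noncomputable def seqExpE {E : Type*} [AddCommMonoid E] (m : ℕ)
    (w : List (Fin m → E)) (j : List ℕ+) : (Fin m × ℕ+) →₀ E :=
  (List.zipWith (colExpE m) w j).sum

/-- The monomial multi-quasisymmetric function with semigroup exponents. -/
noncomputable def MwE (k : Type*) [CommRing k] {E : Type*} [AddCommMonoid E]
    (m : ℕ) (w : List (Fin m → E)) : ((Fin m × ℕ+) →₀ E) → k :=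
  fun d => if ∃ j : List ℕ+, j.length = w.length ∧ j.Chain' (· < ·) ∧
      seqExpE m w j = d then 1 else 0

/-- The multiplication of the formal power series algebra `k[[X]]^E`. -/
noncomputable def mulE {k : Type*} [CommRing k] {E : Type*} [AddCommMonoid E]
    (m : ℕ) (f g : ((Fin m × ℕ+) →₀ E) → k) : ((Fin m × ℕ+) →₀ E) → k :=
  fun d => ∑ᶠ p ∈ {p : ((Fin m × ℕ+) →₀ E) × ((Fin m × ℕ+) →₀ E) |
    p.1 + p.2 = d}, f p.1 * g p.2


section Aux

variable {k : Type*} [CommRing k] {E : Type*} [AddCommMonoid E] {m : ℕ}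

/-- Validity of an index sequence, with strict lower bound `n`. -/
def ok (n : ℕ) (j : List ℕ+) : Prop :=
  j.Pairwise (· < ·) ∧ ∀ c ∈ j, n < (c : ℕ)

lemma ok_nil (n : ℕ) : ok n ([] : List ℕ+) := ⟨List.Pairwise.nil, by simp⟩

lemma ok_cons {n : ℕ} {c : ℕ+} {j : List ℕ+} :
    ok n (c :: j) ↔ n < (c : ℕ) ∧ ok (c : ℕ) j := by
  constructor
  · rintro ⟨hp, hb⟩
    rw [List.pairwise_cons] at hp
    exact ⟨hb c (by simp), hp.2, fun e he => (PNat.coe_lt_coe _ _).mpr (hp.1 e he)⟩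
  · rintro ⟨hn, hp, hb⟩
    refine ⟨List.pairwise_cons.mpr ⟨fun e he => (PNat.coe_lt_coe _ _).mp (hb e he), hp⟩,
      fun e he => ?_⟩
    rcases List.mem_cons.mp he with rfl | he
    · exact hn
    · exact hn.trans (hb e he)

/-- The bounded version of the monomial quasisymmetric function. -/
noncomputable def G (k : Type*) [CommRing k] {E : Type*} [AddCommMonoid E] (m : ℕ)
    (n : ℕ) (w : List (Fin m → E)) : ((Fin m × ℕ+) →₀ E) → k :=
  fun d => if ∃ j : List ℕ+, j.length = w.length ∧ ok n j ∧ seqExpE m w j = d then 1 else 0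

lemma MwE_eq_G (w : List (Fin m → E)) : MwE k m w = G k m 0 w := by
  funext d
  rw [MwE, G]
  refine if_congr (exists_congr fun j => and_congr_right fun _ => and_congr_left fun _ => ?_)
    rfl rfl
  rw [show List.Chain' (· < ·) j ↔ List.IsChain (· < ·) j from Iff.rfl, List.isChain_iff_pairwise]
  exact (and_iff_left (fun c _ => c.pos)).symm

lemma colExpE_apply (c : Fin m → E) (j : ℕ+) (i : Fin m) (col : ℕ+) :
    colExpE m c j (i, col) = if col = j then c i else 0 := by
  classical
  rw [colExpE, Finsupp.finset_sum_apply]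
  by_cases h : col = j
  · subst h
    rw [if_pos rfl, Finset.sum_eq_single i]
    · rw [Finsupp.single_eq_same]
    · intro b _ hb
      rw [Finsupp.single_apply, if_neg]
      simp [Prod.ext_iff, hb]
    · simp
  · rw [if_neg h]
    apply Finset.sum_eq_zero
    intro b _
    rw [Finsupp.single_apply, if_neg]
    simp only [Prod.mk.injEq, not_and]
    exact fun _ hj => h hj.symm

lemma colExpE_add (a b : Fin m → E) (j : ℕ+) :
    colExpE m (a + b) j = colExpE m a j + colExpE m b j := by
  rw [colExpE, colExpE, colExpE, ← Finset.sum_add_distrib]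
  exact Finset.sum_congr rfl fun i _ => by rw [Pi.add_apply, Finsupp.single_add]

lemma seqExpE_nil_left (j : List ℕ+) : seqExpE m ([] : List (Fin m → E)) j = 0 := by
  simp [seqExpE]

lemma seqExpE_nil_right (w : List (Fin m → E)) : seqExpE m w [] = 0 := by
  simp [seqExpE]

lemma seqExpE_cons (c : Fin m → E) (v : List (Fin m → E)) (j₁ : ℕ+) (r : List ℕ+) :
    seqExpE m (c :: v) (j₁ :: r) = colExpE m c j₁ + seqExpE m v r := by
  simp [seqExpE]

lemma seqExpE_low {n : ℕ} (w : List (Fin m → E)) (j : List ℕ+) (hb : ∀ e ∈ j, n < (e : ℕ))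
    (i : Fin m) (col : ℕ+) (hcol : (col : ℕ) ≤ n) : seqExpE m w j (i, col) = 0 := by
  induction j generalizing w with
  | nil => rw [seqExpE_nil_right]; rfl
  | cons j₁ r ih =>
    cases w with
    | nil => rw [seqExpE_nil_left]; rfl
    | cons c v =>
      have hne : ¬ col = j₁ := by
        intro h
        subst h
        exact absurd (hb col (by simp)) (not_lt.mpr hcol)
      rw [seqExpE_cons, Finsupp.add_apply, colExpE_apply, if_neg hne,
        ih v (fun e he => hb e (by simp [he])), add_zero]

lemma seqExpE_inj (w : List (Fin m → E)) (hw : ∀ c ∈ w, c ≠ 0) :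
    ∀ (j j' : List ℕ+), j.length = w.length → j'.length = w.length →
      j.Pairwise (· < ·) → j'.Pairwise (· < ·) →
      seqExpE m w j = seqExpE m w j' → j = j' := by
  induction w with
  | nil =>
    intro j j' h h' _ _ _
    simp only [List.length_nil, List.length_eq_zero_iff] at h h'
    rw [h, h']
  | cons c v ih =>
    intro j j' hl hl' hp hp' he
    obtain ⟨j₁, r, rfl⟩ : ∃ a t, j = a :: t := by
      cases j with
      | nil => simp at hl
      | cons a t => exact ⟨a, t, rfl⟩
    obtain ⟨j₁', r', rfl⟩ : ∃ a t, j' = a :: t := by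
      cases j' with
      | nil => simp at hl'
      | cons a t => exact ⟨a, t, rfl⟩
    obtain ⟨i, hi⟩ : ∃ i, c i ≠ 0 := Function.ne_iff.mp (hw c (by simp))
    have hhead : ∀ (a₁ : ℕ+) (r₁ : List ℕ+), (a₁ :: r₁).Pairwise (· < ·) →
        seqExpE m (c :: v) (a₁ :: r₁) (i, a₁) = c i := by
      intro a₁ r₁ hp₁
      rw [seqExpE_cons, Finsupp.add_apply, colExpE_apply, if_pos rfl,
        seqExpE_low (n := (a₁ : ℕ)) v r₁
          (fun e heq => (PNat.coe_lt_coe _ _).mpr ((List.pairwise_cons.mp hp₁).1 e heq)) i a₁ le_rfl,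
        add_zero]
    have hlow : ∀ (a₁ : ℕ+) (r₁ : List ℕ+), (a₁ :: r₁).Pairwise (· < ·) →
        ∀ col : ℕ+, col < a₁ → ∀ i' : Fin m, seqExpE m (c :: v) (a₁ :: r₁) (i', col) = 0 := by
      intro a₁ r₁ hp₁ col hcol i'
      refine seqExpE_low (n := (col : ℕ)) _ _ ?_ i' col le_rfl
      intro e heq
      rcases List.mem_cons.mp heq with rfl | heq
      · exact (PNat.coe_lt_coe _ _).mpr hcol
      · exact (PNat.coe_lt_coe _ _).mpr (hcol.trans ((List.pairwise_cons.mp hp₁).1 e heq))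
    have hj₁ : j₁ = j₁' := by
      rcases lt_trichotomy j₁ j₁' with h | h | h
      · exfalso
        have h1 := hhead j₁ r hp
        have h2 := hlow j₁' r' hp' j₁ h i
        rw [he, h2] at h1
        exact hi h1.symm
      · exact h
      · exfalso
        have h1 := hhead j₁' r' hp'
        have h2 := hlow j₁ r hp j₁' h i
        rw [← he, h2] at h1
        exact hi h1.symm
    subst hj₁
    have ht : seqExpE m v r = seqExpE m v r' := by
      ext p
      obtain ⟨i', col⟩ := p
      by_cases hc : col = j₁
      · subst hc
        rw [seqExpE_low (n := (col : ℕ)) v r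
            (fun e heq => (PNat.coe_lt_coe _ _).mpr ((List.pairwise_cons.mp hp).1 e heq)) i' col le_rfl,
          seqExpE_low (n := (col : ℕ)) v r'
            (fun e heq => (PNat.coe_lt_coe _ _).mpr ((List.pairwise_cons.mp hp').1 e heq)) i' col le_rfl]
      · have h2 := DFunLike.congr_fun he (i', col)
        rw [seqExpE_cons, seqExpE_cons, Finsupp.add_apply, Finsupp.add_apply,
          colExpE_apply, if_neg hc, zero_add, zero_add] at h2
        exact h2
    rw [ih (fun e he' => hw e (by simp [he'])) r r' (by simpa using hl) (by simpa using hl')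
      (List.pairwise_cons.mp hp).2 (List.pairwise_cons.mp hp').2 ht]


lemma add_eq_zero_pair (hsub : ∀ a b : E, a ≠ 0 → b ≠ 0 → a + b ≠ 0) {a b : E}
    (h : a + b = 0) : a = 0 ∧ b = 0 := by
  by_cases ha : a = 0
  · subst ha
    rw [zero_add] at h
    exact ⟨rfl, h⟩
  · by_cases hb : b = 0
    · subst hb
      rw [add_zero] at h
      exact absurd h ha
    · exact absurd h (hsub a b ha hb)

lemma S_fin (hfin : ∀ e : E, {p : E × E | p.1 + p.2 = e}.Finite)
    (hsub : ∀ a b : E, a ≠ 0 → b ≠ 0 → a + b ≠ 0) (d : (Fin m × ℕ+) →₀ E) :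
    {p : ((Fin m × ℕ+) →₀ E) × ((Fin m × ℕ+) →₀ E) | p.1 + p.2 = d}.Finite := by
  classical
  set f : (((Fin m × ℕ+) →₀ E) × ((Fin m × ℕ+) →₀ E)) → (d.support → E × E) :=
    fun p x => (p.1 x, p.2 x) with hf
  have hz : ∀ pp : ((Fin m × ℕ+) →₀ E) × ((Fin m × ℕ+) →₀ E), pp.1 + pp.2 = d →
      ∀ x ∉ d.support, pp.1 x = 0 ∧ pp.2 x = 0 := by
    intro pp hpp x hx
    have h0 : pp.1 x + pp.2 x = 0 := by
      rw [← Finsupp.add_apply, hpp]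
      simpa using Finsupp.notMem_support_iff.mp hx
    exact add_eq_zero_pair hsub h0
  apply Set.Finite.of_finite_image (f := f)
  · apply Set.Finite.subset (Set.Finite.pi (t := fun x : d.support => {q : E × E | q.1 + q.2 = d x})
      (fun x => hfin (d x)))
    rintro _ ⟨p, hp, rfl⟩ x _
    have : p.1 + p.2 = d := hp
    show p.1 x + p.2 x = d (x : Fin m × ℕ+)
    rw [← Finsupp.add_apply, this]
  · intro p hp p' hp' h
    have hp : p.1 + p.2 = d := hp
    have hp' : p'.1 + p'.2 = d := hp'
    have key : ∀ x, p.1 x = p'.1 x ∧ p.2 x = p'.2 x := by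
      intro x
      by_cases hx : x ∈ d.support
      · have := congrFun h ⟨x, hx⟩
        simpa [hf, Prod.ext_iff] using this
      · obtain ⟨h1, h2⟩ := hz p hp x hx
        obtain ⟨h1', h2'⟩ := hz p' hp' x hx
        rw [h1, h2, h1', h2']
        exact ⟨rfl, rfl⟩
    refine Prod.ext (Finsupp.ext fun x => (key x).1) (Finsupp.ext fun x => (key x).2)

/-- The set indexing head-column decompositions. -/
def Qset (m : ℕ) {E : Type*} [AddCommMonoid E] (n : ℕ) (c : Fin m → E)
    (d : (Fin m × ℕ+) →₀ E) : Set (ℕ+ × ((Fin m × ℕ+) →₀ E)) :=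
  {q | n < (q.1 : ℕ) ∧ colExpE m c q.1 + q.2 = d}

lemma Q_fin (hfin : ∀ e : E, {p : E × E | p.1 + p.2 = e}.Finite)
    (hsub : ∀ a b : E, a ≠ 0 → b ≠ 0 → a + b ≠ 0) {c : Fin m → E} (hc : c ≠ 0)
    (n : ℕ) (d : (Fin m × ℕ+) →₀ E) : (Qset m n c d).Finite := by
  apply Set.Finite.of_finite_image
    (f := fun q : ℕ+ × ((Fin m × ℕ+) →₀ E) => (colExpE m c q.1, q.2))
  · apply Set.Finite.subset (S_fin hfin hsub d)
    rintro _ ⟨q, hq, rfl⟩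
    exact hq.2
  · intro q hq q' hq' h
    simp only [Prod.ext_iff] at h
    obtain ⟨h1, h2⟩ := h
    obtain ⟨i, hi⟩ := Function.ne_iff.mp hc
    have h3 := DFunLike.congr_fun h1 (i, q.1)
    rw [colExpE_apply, colExpE_apply, if_pos rfl] at h3
    by_cases hqq : q.1 = q'.1
    · exact Prod.ext hqq h2
    · rw [if_neg hqq] at h3
      exact absurd h3 hi

lemma G_nil_apply (n : ℕ) (d : (Fin m × ℕ+) →₀ E) :
    G k m n [] d = if d = 0 then 1 else 0 := by
  rw [G]
  refine if_congr ?_ rfl rfl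
  constructor
  · rintro ⟨j, hj, _, he⟩
    rw [← he, seqExpE_nil_left]
  · rintro rfl
    exact ⟨[], rfl, ok_nil n, seqExpE_nil_left _⟩

/-- Head-column recursion for `G`. -/
lemma headRec {c : Fin m → E} (hc : c ≠ 0) {v : List (Fin m → E)} (hv : ∀ e ∈ v, e ≠ 0)
    (n : ℕ) (d : (Fin m × ℕ+) →₀ E) :
    G k m n (c :: v) d = ∑ᶠ q ∈ Qset m n c d, G k m (q.1 : ℕ) v q.2 := by
  classical
  have hcv : ∀ e ∈ c :: v, e ≠ 0 := by
    intro e he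
    rcases List.mem_cons.mp he with rfl | he
    · exact hc
    · exact hv e he
  rw [finsum_mem_def]
  by_cases hex : ∃ j : List ℕ+, j.length = (c :: v).length ∧ ok n j ∧ seqExpE m (c :: v) j = d
  · obtain ⟨j, hlen, hok, hexp⟩ := hex
    obtain ⟨j₁, r, rfl⟩ : ∃ a t, j = a :: t := by
      cases j with
      | nil => simp at hlen
      | cons a t => exact ⟨a, t, rfl⟩
    obtain ⟨hn, hokr⟩ := ok_cons.mp hok
    have hq₀mem : (j₁, seqExpE m v r) ∈ Qset m n c d := by
      refine ⟨hn, ?_⟩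
      rw [← seqExpE_cons]
      exact hexp
    rw [finsum_eq_single _ (j₁, seqExpE m v r) ?_]
    · rw [Set.indicator_of_mem hq₀mem, G, if_pos ⟨j₁ :: r, hlen, hok, hexp⟩,
        G, if_pos ⟨r, by simpa using hlen, hokr, rfl⟩]
    · intro q hne
      by_contra h0
      have hqmem : q ∈ Qset m n c d := by
        by_contra hq
        rw [Set.indicator_of_notMem hq] at h0
        exact h0 rfl
      rw [Set.indicator_of_mem hqmem, G] at h0
      have hw : ∃ j : List ℕ+, j.length = v.length ∧ ok (q.1 : ℕ) j ∧ seqExpE m v j = q.2 := by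
        by_contra hww
        rw [if_neg hww] at h0
        exact h0 rfl
      obtain ⟨r', hlen', hok', hexp'⟩ := hw
      have hfull : seqExpE m (c :: v) (q.1 :: r') = d := by
        rw [seqExpE_cons, hexp']
        exact hqmem.2
      have hokfull : ok n (q.1 :: r') := ok_cons.mpr ⟨hqmem.1, hok'⟩
      have := seqExpE_inj (c :: v) hcv (q.1 :: r') (j₁ :: r) (by simpa using hlen') hlen
        hokfull.1 hok.1 (by rw [hfull, hexp])
      apply hne
      have hq1 : q.1 = j₁ := by injection this
      have hr : r' = r := by injection this
      have : q.2 = seqExpE m v r := by rw [← hexp', hr]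
      exact Prod.ext hq1 this
  · rw [G, if_neg hex]
    refine (finsum_eq_zero_of_forall_eq_zero fun q => ?_).symm
    by_cases hq : q ∈ Qset m n c d
    · rw [Set.indicator_of_mem hq, G, if_neg]
      rintro ⟨r', hlen', hok', hexp'⟩
      exact hex ⟨q.1 :: r', by simpa using hlen', ok_cons.mpr ⟨hq.1, hok'⟩,
        by rw [seqExpE_cons, hexp']; exact hq.2⟩
    · exact Set.indicator_of_notMem hq _


lemma mulE_eq (f g : ((Fin m × ℕ+) →₀ E) → k) (d : (Fin m × ℕ+) →₀ E) :
    mulE m f g d = ∑ᶠ p ∈ {p : ((Fin m × ℕ+) →₀ E) × ((Fin m × ℕ+) →₀ E) |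
      p.1 + p.2 = d}, f p.1 * g p.2 := rfl

lemma mulE_G_nil_left (f : ((Fin m × ℕ+) →₀ E) → k) (n : ℕ) :
    mulE m (G k m n []) f = f := by
  classical
  funext d
  rw [mulE_eq, finsum_mem_def, finsum_eq_single _ ((0 : (Fin m × ℕ+) →₀ E), d)]
  · rw [Set.indicator_of_mem (by simp [Set.mem_setOf_eq]), G_nil_apply, if_pos rfl, one_mul]
  · intro p hne
    by_cases hm : p ∈ {p : ((Fin m × ℕ+) →₀ E) × ((Fin m × ℕ+) →₀ E) | p.1 + p.2 = d}
    · rw [Set.indicator_of_mem hm, G_nil_apply, if_neg, zero_mul]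
      intro h1
      apply hne
      have hd : p.2 = d := by
        have := hm
        rw [Set.mem_setOf_eq, h1, zero_add] at this
        exact this
      exact Prod.ext h1 hd
    · exact Set.indicator_of_notMem hm _

lemma mulE_G_nil_right (f : ((Fin m × ℕ+) →₀ E) → k) (n : ℕ) :
    mulE m f (G k m n []) = f := by
  classical
  funext d
  rw [mulE_eq, finsum_mem_def, finsum_eq_single _ (d, (0 : (Fin m × ℕ+) →₀ E))]
  · rw [Set.indicator_of_mem (by simp [Set.mem_setOf_eq]), G_nil_apply, if_pos rfl, mul_one]
  · intro p hne
    by_cases hm : p ∈ {p : ((Fin m × ℕ+) →₀ E) × ((Fin m × ℕ+) →₀ E) | p.1 + p.2 = d}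
    · rw [Set.indicator_of_mem hm, G_nil_apply, if_neg, mul_zero]
      intro h2
      apply hne
      have hd : p.1 = d := by
        have := hm
        rw [Set.mem_setOf_eq, h2, add_zero] at this
        exact this
      exact Prod.ext hd h2
    · exact Set.indicator_of_notMem hm _

lemma qsh_nil_left {C : Type*} (op : C → C → C) (y : List C) :
    qsh (k := k) op [] y = Finsupp.single y 1 := by rw [qsh]

lemma qsh_nil_right {C : Type*} (op : C → C → C) (x : List C) :
    qsh (k := k) op x [] = Finsupp.single x 1 := by
  cases x with
  | nil => rw [qsh]
  | cons a t => rw [qsh]; exact fun h => by simp at h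

lemma qsh_cons_cons {C : Type*} (op : C → C → C) (a b : C) (x y : List C) :
    qsh (k := k) op (a :: x) (b :: y) =
      (qsh op x (b :: y)).mapDomain (a :: ·) + (qsh op (a :: x) y).mapDomain (b :: ·) +
        (qsh op x y).mapDomain (op a b :: ·) := by rw [qsh]

lemma pi_add_ne_zero (hsub : ∀ a b : E, a ≠ 0 → b ≠ 0 → a + b ≠ 0)
    {a b : Fin m → E} (ha : a ≠ 0) : a + b ≠ 0 := by
  obtain ⟨i, hi⟩ := Function.ne_iff.mp ha
  refine Function.ne_iff.mpr ⟨i, ?_⟩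
  show a i + b i ≠ 0
  intro h0
  exact hi (add_eq_zero_pair hsub h0).1

lemma qsh_letters (hsub : ∀ a b : E, a ≠ 0 → b ≠ 0 → a + b ≠ 0) :
    ∀ (w u : List (Fin m → E)), (∀ c ∈ w, c ≠ 0) → (∀ c ∈ u, c ≠ 0) →
      ∀ z ∈ (qsh (k := k) (· + ·) w u).support, ∀ c ∈ z, c ≠ 0 := by
  classical
  intro w u
  induction w, u using qsh.induct (C := Fin m → E) with
  | case1 y =>
    intro _ hu z hz
    rw [qsh_nil_left] at hz
    have := Finsupp.support_single_subset hz
    rw [Finset.mem_singleton] at this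
    subst this
    exact hu
  | case2 x hx =>
    intro hw _ z hz
    rw [qsh_nil_right] at hz
    have := Finsupp.support_single_subset hz
    rw [Finset.mem_singleton] at this
    subst this
    exact hw
  | case3 a x b y ih1 ih2 ih3 =>
    intro hw hu z hz
    have hx' : ∀ c ∈ x, c ≠ 0 := fun c hc => hw c (by simp [hc])
    have hy' : ∀ c ∈ y, c ≠ 0 := fun c hc => hu c (by simp [hc])
    have ha : a ≠ 0 := hw a (by simp)
    have hb : b ≠ 0 := hu b (by simp)
    rw [qsh_cons_cons] at hz
    have hz' := Finsupp.support_add hz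
    rw [Finset.mem_union] at hz'
    have key : ∀ (h : Fin m → E) (f : List (Fin m → E) →₀ k),
        h ≠ 0 → (∀ z' ∈ f.support, ∀ c ∈ z', c ≠ 0) →
        z ∈ (f.mapDomain (h :: ·)).support → ∀ c ∈ z, c ≠ 0 := by
      intro h f hh hf hzz
      have := Finsupp.mapDomain_support hzz
      rw [Finset.mem_image] at this
      obtain ⟨z', hz2, rfl⟩ := this
      intro c hc
      rcases List.mem_cons.mp hc with rfl | hc
      · exact hh
      · exact hf z' hz2 c hc
    rcases hz' with hz' | hz'
    · have hz'' := Finsupp.support_add hz'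
      rw [Finset.mem_union] at hz''
      rcases hz'' with hz'' | hz''
      · exact key a _ ha (ih1 hx' hu) hz''
      · exact key b _ hb (ih2 hw hy') hz''
    · exact key (a + b) _ (pi_add_ne_zero hsub ha) (ih3 hx' hy') hz'

lemma headRecF (hfin : ∀ e : E, {p : E × E | p.1 + p.2 = e}.Finite)
    (hsub : ∀ a b : E, a ≠ 0 → b ≠ 0 → a + b ≠ 0)
    {c : Fin m → E} (hc : c ≠ 0) {v : List (Fin m → E)} (hv : ∀ e ∈ v, e ≠ 0)
    (n : ℕ) (d : (Fin m × ℕ+) →₀ E) :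
    G k m n (c :: v) d =
      ∑ q ∈ (Q_fin hfin hsub hc n d).toFinset, G k m (q.1 : ℕ) v q.2 := by
  rw [headRec hc hv, ← finsum_mem_coe_finset, Set.Finite.coe_toFinset]

lemma mulE_eqF (hfin : ∀ e : E, {p : E × E | p.1 + p.2 = e}.Finite)
    (hsub : ∀ a b : E, a ≠ 0 → b ≠ 0 → a + b ≠ 0)
    (f g : ((Fin m × ℕ+) →₀ E) → k) (d : (Fin m × ℕ+) →₀ E) :
    mulE m f g d = ∑ p ∈ (S_fin hfin hsub d).toFinset, f p.1 * g p.2 := by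
  rw [mulE_eq, ← finsum_mem_coe_finset, Set.Finite.coe_toFinset]


lemma term1 (hfin : ∀ e : E, {p : E × E | p.1 + p.2 = e}.Finite)
    (hsub : ∀ a b : E, a ≠ 0 → b ≠ 0 → a + b ≠ 0)
    {a b : Fin m → E} {x y : List (Fin m → E)} (ha : a ≠ 0) (hb : b ≠ 0)
    (hx' : ∀ c ∈ x, c ≠ 0) (hu : ∀ c ∈ b :: y, c ≠ 0)
    (hih : ∀ n' : ℕ, mulE m (G k m n' x) (G k m n' (b :: y)) =
      (qsh (k := k) (· + ·) x (b :: y)).sum fun z c => c • G k m n' z)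
    (n : ℕ) (d : (Fin m × ℕ+) →₀ E) :
    ∑ z ∈ (qsh (k := k) (· + ·) x (b :: y)).support,
        qsh (k := k) (· + ·) x (b :: y) z * G k m n (a :: z) d =
      ∑ t ∈ ((S_fin hfin hsub d).toFinset.sigma fun p =>
          (Q_fin hfin hsub ha n p.1).toFinset ×ˢ (Q_fin hfin hsub hb n p.2).toFinset).filter
          (fun t => t.2.1.1 < t.2.2.1),
        G k m (t.2.1.1 : ℕ) x t.2.1.2 * G k m (t.2.2.1 : ℕ) y t.2.2.2 := by
  classical
  have hy' : ∀ c ∈ y, c ≠ 0 := fun c hc => hu c (by simp [hc])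
  calc
    ∑ z ∈ (qsh (k := k) (· + ·) x (b :: y)).support,
        qsh (k := k) (· + ·) x (b :: y) z * G k m n (a :: z) d
      = ∑ z ∈ (qsh (k := k) (· + ·) x (b :: y)).support,
          ∑ q ∈ (Q_fin hfin hsub ha n d).toFinset,
          qsh (k := k) (· + ·) x (b :: y) z * G k m (q.1 : ℕ) z q.2 := by
        refine Finset.sum_congr rfl fun z hz => ?_
        rw [headRecF hfin hsub ha (qsh_letters hsub x (b :: y) hx' hu z hz) n d, Finset.mul_sum]
    _ = ∑ q ∈ (Q_fin hfin hsub ha n d).toFinset,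
          ∑ z ∈ (qsh (k := k) (· + ·) x (b :: y)).support,
          qsh (k := k) (· + ·) x (b :: y) z * G k m (q.1 : ℕ) z q.2 := Finset.sum_comm
    _ = ∑ q ∈ (Q_fin hfin hsub ha n d).toFinset,
          ∑ p ∈ (S_fin hfin hsub q.2).toFinset,
          G k m (q.1 : ℕ) x p.1 * G k m (q.1 : ℕ) (b :: y) p.2 := by
        refine Finset.sum_congr rfl fun q _ => ?_
        have h := congrFun (hih (q.1 : ℕ)) q.2
        rw [mulE_eqF hfin hsub] at h
        simp only [Finsupp.sum_apply', Finsupp.sum, Finset.sum_apply, Pi.smul_apply, smul_eq_mul] at h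
        exact h.symm
    _ = ∑ q ∈ (Q_fin hfin hsub ha n d).toFinset,
          ∑ p ∈ (S_fin hfin hsub q.2).toFinset,
          ∑ r ∈ (Q_fin hfin hsub hb (q.1 : ℕ) p.2).toFinset,
          G k m (q.1 : ℕ) x p.1 * G k m (r.1 : ℕ) y r.2 := by
        refine Finset.sum_congr rfl fun q _ => Finset.sum_congr rfl fun p _ => ?_
        rw [headRecF hfin hsub hb hy' (q.1 : ℕ) p.2, Finset.mul_sum]
    _ = ∑ q ∈ (Q_fin hfin hsub ha n d).toFinset,
          ∑ s ∈ (S_fin hfin hsub q.2).toFinset.sigma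
            (fun p => (Q_fin hfin hsub hb (q.1 : ℕ) p.2).toFinset),
          G k m (q.1 : ℕ) x s.1.1 * G k m (s.2.1 : ℕ) y s.2.2 :=
        Finset.sum_congr rfl fun q _ => Finset.sum_sigma' _ _ _
    _ = ∑ s ∈ (Q_fin hfin hsub ha n d).toFinset.sigma (fun q =>
            (S_fin hfin hsub q.2).toFinset.sigma
              (fun p => (Q_fin hfin hsub hb (q.1 : ℕ) p.2).toFinset)),
          G k m (s.1.1 : ℕ) x s.2.1.1 * G k m (s.2.2.1 : ℕ) y s.2.2.2 :=
        Finset.sum_sigma' _ _ _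
    _ = ∑ t ∈ ((S_fin hfin hsub d).toFinset.sigma fun p =>
          (Q_fin hfin hsub ha n p.1).toFinset ×ˢ (Q_fin hfin hsub hb n p.2).toFinset).filter
          (fun t => t.2.1.1 < t.2.2.1),
        G k m (t.2.1.1 : ℕ) x t.2.1.2 * G k m (t.2.2.1 : ℕ) y t.2.2.2 := ?_
  refine Finset.sum_nbij'
    (fun s => ⟨(colExpE m a s.1.1 + s.2.1.1, s.2.1.2), ((s.1.1, s.2.1.1), s.2.2)⟩)
    (fun t => ⟨(t.2.1.1, t.2.1.2 + t.1.2), (t.2.1.2, t.1.2), t.2.2⟩)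
    ?_ ?_ ?_ ?_ ?_
  · rintro ⟨⟨q₁, qq⟩, ⟨p₁, p₂⟩, r₁, r₂⟩ hs
    simp only [Finset.mem_sigma, Set.Finite.mem_toFinset, Qset, Set.mem_setOf_eq,
      Finset.mem_filter, Finset.mem_product] at hs ⊢
    obtain ⟨⟨hq1, hq2⟩, hp, hr1, hr2⟩ := hs
    exact ⟨⟨by rw [add_assoc, hp, hq2], ⟨hq1, trivial⟩, ⟨hq1.trans hr1, hr2⟩⟩,
      (PNat.coe_lt_coe _ _).mp hr1⟩
  · rintro ⟨⟨p₁, p₂⟩, ⟨q₁, q₂⟩, r₁, r₂⟩ ht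
    simp only [Finset.mem_sigma, Set.Finite.mem_toFinset, Qset, Set.mem_setOf_eq,
      Finset.mem_filter, Finset.mem_product] at ht ⊢
    obtain ⟨⟨hd, ⟨hq1, hq2⟩, hr1, hr2⟩, hlt⟩ := ht
    exact ⟨⟨hq1, by rw [← add_assoc, hq2, hd]⟩, trivial, (PNat.coe_lt_coe _ _).mpr hlt, hr2⟩
  · rintro ⟨⟨q₁, qq⟩, ⟨p₁, p₂⟩, r₁, r₂⟩ hs
    simp only [Finset.mem_sigma, Set.Finite.mem_toFinset, Qset, Set.mem_setOf_eq,
      Finset.mem_product] at hs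
    obtain ⟨⟨hq1, hq2⟩, hp, hr1, hr2⟩ := hs
    simp only [hp]
  · rintro ⟨⟨p₁, p₂⟩, ⟨q₁, q₂⟩, r₁, r₂⟩ ht
    simp only [Finset.mem_sigma, Set.Finite.mem_toFinset, Qset, Set.mem_setOf_eq,
      Finset.mem_filter, Finset.mem_product] at ht
    obtain ⟨⟨hd, ⟨hq1, hq2⟩, hr1, hr2⟩, hlt⟩ := ht
    simp only [hq2]
  · rintro ⟨⟨q₁, qq⟩, ⟨p₁, p₂⟩, r₁, r₂⟩ _
    rfl


lemma term2 (hfin : ∀ e : E, {p : E × E | p.1 + p.2 = e}.Finite)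
    (hsub : ∀ a b : E, a ≠ 0 → b ≠ 0 → a + b ≠ 0)
    {a b : Fin m → E} {x y : List (Fin m → E)} (ha : a ≠ 0) (hb : b ≠ 0)
    (hw : ∀ c ∈ a :: x, c ≠ 0) (hy' : ∀ c ∈ y, c ≠ 0)
    (hih : ∀ n' : ℕ, mulE m (G k m n' (a :: x)) (G k m n' y) =
      (qsh (k := k) (· + ·) (a :: x) y).sum fun z c => c • G k m n' z)
    (n : ℕ) (d : (Fin m × ℕ+) →₀ E) :
    ∑ z ∈ (qsh (k := k) (· + ·) (a :: x) y).support,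
        qsh (k := k) (· + ·) (a :: x) y z * G k m n (b :: z) d =
      ∑ t ∈ (((S_fin hfin hsub d).toFinset.sigma fun p =>
          (Q_fin hfin hsub ha n p.1).toFinset ×ˢ (Q_fin hfin hsub hb n p.2).toFinset).filter
          (fun t => ¬ t.2.1.1 < t.2.2.1)).filter (fun t => t.2.2.1 < t.2.1.1),
        G k m (t.2.1.1 : ℕ) x t.2.1.2 * G k m (t.2.2.1 : ℕ) y t.2.2.2 := by
  classical
  have hx' : ∀ c ∈ x, c ≠ 0 := fun c hc => hw c (by simp [hc])
  calc
    ∑ z ∈ (qsh (k := k) (· + ·) (a :: x) y).support,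
        qsh (k := k) (· + ·) (a :: x) y z * G k m n (b :: z) d
      = ∑ z ∈ (qsh (k := k) (· + ·) (a :: x) y).support,
          ∑ r ∈ (Q_fin hfin hsub hb n d).toFinset,
          qsh (k := k) (· + ·) (a :: x) y z * G k m (r.1 : ℕ) z r.2 := by
        refine Finset.sum_congr rfl fun z hz => ?_
        rw [headRecF hfin hsub hb (qsh_letters hsub (a :: x) y hw hy' z hz) n d, Finset.mul_sum]
    _ = ∑ r ∈ (Q_fin hfin hsub hb n d).toFinset,
          ∑ z ∈ (qsh (k := k) (· + ·) (a :: x) y).support,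
          qsh (k := k) (· + ·) (a :: x) y z * G k m (r.1 : ℕ) z r.2 := Finset.sum_comm
    _ = ∑ r ∈ (Q_fin hfin hsub hb n d).toFinset,
          ∑ p ∈ (S_fin hfin hsub r.2).toFinset,
          G k m (r.1 : ℕ) (a :: x) p.1 * G k m (r.1 : ℕ) y p.2 := by
        refine Finset.sum_congr rfl fun r _ => ?_
        have h := congrFun (hih (r.1 : ℕ)) r.2
        rw [mulE_eqF hfin hsub] at h
        simp only [Finsupp.sum_apply', Finsupp.sum, Finset.sum_apply, Pi.smul_apply,
          smul_eq_mul] at h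
        exact h.symm
    _ = ∑ r ∈ (Q_fin hfin hsub hb n d).toFinset,
          ∑ p ∈ (S_fin hfin hsub r.2).toFinset,
          ∑ q ∈ (Q_fin hfin hsub ha (r.1 : ℕ) p.1).toFinset,
          G k m (q.1 : ℕ) x q.2 * G k m (r.1 : ℕ) y p.2 := by
        refine Finset.sum_congr rfl fun r _ => Finset.sum_congr rfl fun p _ => ?_
        rw [headRecF hfin hsub ha hx' (r.1 : ℕ) p.1, Finset.sum_mul]
    _ = ∑ r ∈ (Q_fin hfin hsub hb n d).toFinset,
          ∑ s ∈ (S_fin hfin hsub r.2).toFinset.sigma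
            (fun p => (Q_fin hfin hsub ha (r.1 : ℕ) p.1).toFinset),
          G k m (s.2.1 : ℕ) x s.2.2 * G k m (r.1 : ℕ) y s.1.2 :=
        Finset.sum_congr rfl fun r _ => Finset.sum_sigma' _ _ _
    _ = ∑ s ∈ (Q_fin hfin hsub hb n d).toFinset.sigma (fun r =>
            (S_fin hfin hsub r.2).toFinset.sigma
              (fun p => (Q_fin hfin hsub ha (r.1 : ℕ) p.1).toFinset)),
          G k m (s.2.2.1 : ℕ) x s.2.2.2 * G k m (s.1.1 : ℕ) y s.2.1.2 :=
        Finset.sum_sigma' _ _ _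
    _ = ∑ t ∈ (((S_fin hfin hsub d).toFinset.sigma fun p =>
          (Q_fin hfin hsub ha n p.1).toFinset ×ˢ (Q_fin hfin hsub hb n p.2).toFinset).filter
          (fun t => ¬ t.2.1.1 < t.2.2.1)).filter (fun t => t.2.2.1 < t.2.1.1),
        G k m (t.2.1.1 : ℕ) x t.2.1.2 * G k m (t.2.2.1 : ℕ) y t.2.2.2 := ?_
  refine Finset.sum_nbij'
    (fun s => ⟨(s.2.1.1, colExpE m b s.1.1 + s.2.1.2), (s.2.2, (s.1.1, s.2.1.2))⟩)
    (fun t => ⟨(t.2.2.1, t.1.1 + t.2.2.2), (t.1.1, t.2.2.2), t.2.1⟩)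
    ?_ ?_ ?_ ?_ ?_
  · rintro ⟨⟨r₁, rr⟩, ⟨p₁, p₂⟩, q₁, q₂⟩ hs
    simp only [Finset.mem_sigma, Set.Finite.mem_toFinset, Qset, Set.mem_setOf_eq,
      Finset.mem_filter, Finset.mem_product] at hs ⊢
    obtain ⟨⟨hr1, hr2⟩, hp, hq1, hq2⟩ := hs
    refine ⟨⟨⟨by rw [add_left_comm, hp, hr2], ⟨hr1.trans hq1, hq2⟩, ⟨hr1, trivial⟩⟩, ?_⟩, ?_⟩
    · exact lt_asymm ((PNat.coe_lt_coe _ _).mp hq1)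
    · exact (PNat.coe_lt_coe _ _).mp hq1
  · rintro ⟨⟨p₁, p₂⟩, ⟨q₁, q₂⟩, r₁, r₂⟩ ht
    simp only [Finset.mem_sigma, Set.Finite.mem_toFinset, Qset, Set.mem_setOf_eq,
      Finset.mem_filter, Finset.mem_product] at ht ⊢
    obtain ⟨⟨⟨hd, ⟨hq1, hq2⟩, hr1, hr2⟩, hn1⟩, hlt⟩ := ht
    exact ⟨⟨hr1, by rw [add_left_comm, hr2, hd]⟩, trivial,
      (PNat.coe_lt_coe _ _).mpr hlt, hq2⟩
  · rintro ⟨⟨r₁, rr⟩, ⟨p₁, p₂⟩, q₁, q₂⟩ hs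
    simp only [Finset.mem_sigma, Set.Finite.mem_toFinset, Qset, Set.mem_setOf_eq,
      Finset.mem_product] at hs
    obtain ⟨⟨hr1, hr2⟩, hp, hq1, hq2⟩ := hs
    simp only [hp]
  · rintro ⟨⟨p₁, p₂⟩, ⟨q₁, q₂⟩, r₁, r₂⟩ ht
    simp only [Finset.mem_sigma, Set.Finite.mem_toFinset, Qset, Set.mem_setOf_eq,
      Finset.mem_filter, Finset.mem_product] at ht
    obtain ⟨⟨⟨hd, ⟨hq1, hq2⟩, hr1, hr2⟩, hn1⟩, hlt⟩ := ht
    simp only [hr2]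
  · rintro ⟨⟨r₁, rr⟩, ⟨p₁, p₂⟩, q₁, q₂⟩ _
    rfl

lemma term3 (hfin : ∀ e : E, {p : E × E | p.1 + p.2 = e}.Finite)
    (hsub : ∀ a b : E, a ≠ 0 → b ≠ 0 → a + b ≠ 0)
    {a b : Fin m → E} {x y : List (Fin m → E)} (ha : a ≠ 0) (hb : b ≠ 0)
    (hx' : ∀ c ∈ x, c ≠ 0) (hy' : ∀ c ∈ y, c ≠ 0)
    (hih : ∀ n' : ℕ, mulE m (G k m n' x) (G k m n' y) =
      (qsh (k := k) (· + ·) x y).sum fun z c => c • G k m n' z)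
    (n : ℕ) (d : (Fin m × ℕ+) →₀ E) :
    ∑ z ∈ (qsh (k := k) (· + ·) x y).support,
        qsh (k := k) (· + ·) x y z * G k m n ((a + b) :: z) d =
      ∑ t ∈ (((S_fin hfin hsub d).toFinset.sigma fun p =>
          (Q_fin hfin hsub ha n p.1).toFinset ×ˢ (Q_fin hfin hsub hb n p.2).toFinset).filter
          (fun t => ¬ t.2.1.1 < t.2.2.1)).filter (fun t => ¬ t.2.2.1 < t.2.1.1),
        G k m (t.2.1.1 : ℕ) x t.2.1.2 * G k m (t.2.2.1 : ℕ) y t.2.2.2 := by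
  classical
  have hab : a + b ≠ 0 := pi_add_ne_zero hsub ha
  calc
    ∑ z ∈ (qsh (k := k) (· + ·) x y).support,
        qsh (k := k) (· + ·) x y z * G k m n ((a + b) :: z) d
      = ∑ z ∈ (qsh (k := k) (· + ·) x y).support,
          ∑ s ∈ (Q_fin hfin hsub hab n d).toFinset,
          qsh (k := k) (· + ·) x y z * G k m (s.1 : ℕ) z s.2 := by
        refine Finset.sum_congr rfl fun z hz => ?_
        rw [headRecF hfin hsub hab (qsh_letters hsub x y hx' hy' z hz) n d, Finset.mul_sum]
    _ = ∑ s ∈ (Q_fin hfin hsub hab n d).toFinset,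
          ∑ z ∈ (qsh (k := k) (· + ·) x y).support,
          qsh (k := k) (· + ·) x y z * G k m (s.1 : ℕ) z s.2 := Finset.sum_comm
    _ = ∑ s ∈ (Q_fin hfin hsub hab n d).toFinset,
          ∑ p ∈ (S_fin hfin hsub s.2).toFinset,
          G k m (s.1 : ℕ) x p.1 * G k m (s.1 : ℕ) y p.2 := by
        refine Finset.sum_congr rfl fun s _ => ?_
        have h := congrFun (hih (s.1 : ℕ)) s.2
        rw [mulE_eqF hfin hsub] at h
        simp only [Finsupp.sum_apply', Finsupp.sum, Finset.sum_apply, Pi.smul_apply,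
          smul_eq_mul] at h
        exact h.symm
    _ = ∑ t ∈ (Q_fin hfin hsub hab n d).toFinset.sigma
            (fun s => (S_fin hfin hsub s.2).toFinset),
          G k m (t.1.1 : ℕ) x t.2.1 * G k m (t.1.1 : ℕ) y t.2.2 :=
        Finset.sum_sigma' _ _ _
    _ = ∑ t ∈ (((S_fin hfin hsub d).toFinset.sigma fun p =>
          (Q_fin hfin hsub ha n p.1).toFinset ×ˢ (Q_fin hfin hsub hb n p.2).toFinset).filter
          (fun t => ¬ t.2.1.1 < t.2.2.1)).filter (fun t => ¬ t.2.2.1 < t.2.1.1),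
        G k m (t.2.1.1 : ℕ) x t.2.1.2 * G k m (t.2.2.1 : ℕ) y t.2.2.2 := ?_
  refine Finset.sum_nbij'
    (fun s => ⟨(colExpE m a s.1.1 + s.2.1, colExpE m b s.1.1 + s.2.2),
      ((s.1.1, s.2.1), (s.1.1, s.2.2))⟩)
    (fun t => ⟨(t.2.1.1, t.2.1.2 + t.2.2.2), (t.2.1.2, t.2.2.2)⟩)
    ?_ ?_ ?_ ?_ ?_
  · rintro ⟨⟨w₁, ww⟩, e₁, e₂⟩ hs
    simp only [Finset.mem_sigma, Set.Finite.mem_toFinset, Qset, Set.mem_setOf_eq,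
      Finset.mem_filter, Finset.mem_product] at hs ⊢
    obtain ⟨⟨hw1, hw2⟩, hp⟩ := hs
    refine ⟨⟨⟨?_, ⟨hw1, trivial⟩, ⟨hw1, trivial⟩⟩, ?_⟩, ?_⟩
    · rw [add_add_add_comm, ← colExpE_add, hp, hw2]
    · exact lt_irrefl _
    · exact lt_irrefl _
  · rintro ⟨⟨p₁, p₂⟩, ⟨q₁, q₂⟩, r₁, r₂⟩ ht
    simp only [Finset.mem_sigma, Set.Finite.mem_toFinset, Qset, Set.mem_setOf_eq,
      Finset.mem_filter, Finset.mem_product] at ht ⊢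
    obtain ⟨⟨⟨hd, ⟨hq1, hq2⟩, hr1, hr2⟩, hn1⟩, hn2⟩ := ht
    obtain rfl : q₁ = r₁ := le_antisymm (not_lt.mp hn2) (not_lt.mp hn1)
    exact ⟨⟨hq1, by rw [colExpE_add, add_add_add_comm, hq2, hr2, hd]⟩, trivial⟩
  · rintro ⟨⟨w₁, ww⟩, e₁, e₂⟩ hs
    simp only [Finset.mem_sigma, Set.Finite.mem_toFinset, Qset, Set.mem_setOf_eq,
      Finset.mem_product] at hs
    obtain ⟨⟨hw1, hw2⟩, hp⟩ := hs
    simp only [hp]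
  · rintro ⟨⟨p₁, p₂⟩, ⟨q₁, q₂⟩, r₁, r₂⟩ ht
    simp only [Finset.mem_sigma, Set.Finite.mem_toFinset, Qset, Set.mem_setOf_eq,
      Finset.mem_filter, Finset.mem_product] at ht
    obtain ⟨⟨⟨hd, ⟨hq1, hq2⟩, hr1, hr2⟩, hn1⟩, hn2⟩ := ht
    obtain rfl : q₁ = r₁ := le_antisymm (not_lt.mp hn2) (not_lt.mp hn1)
    simp only [hq2, hr2]
  · rintro ⟨⟨w₁, ww⟩, e₁, e₂⟩ _
    rfl


lemma gen (hfin : ∀ e : E, {p : E × E | p.1 + p.2 = e}.Finite)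
    (hsub : ∀ a b : E, a ≠ 0 → b ≠ 0 → a + b ≠ 0) :
    ∀ (w u : List (Fin m → E)), (∀ c ∈ w, c ≠ 0) → (∀ c ∈ u, c ≠ 0) → ∀ n : ℕ,
      mulE m (G k m n w) (G k m n u) =
        (qsh (k := k) (· + ·) w u).sum fun z c => c • G k m n z := by
  intro w u
  induction w, u using qsh.induct
      (C := Fin m → E) with
  | case1 y =>
    intro _ _ n
    rw [qsh_nil_left, Finsupp.sum_single_index (h := fun z c => c • G k m n z)
      (zero_smul k _), one_smul, mulE_G_nil_left]
  | case2 x hx =>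
    intro _ _ n
    rw [qsh_nil_right, Finsupp.sum_single_index (h := fun z c => c • G k m n z)
      (zero_smul k _), one_smul, mulE_G_nil_right]
  | case3 a x b y ih1 ih2 ih3 =>
    intro hw hu n
    have ha : a ≠ 0 := hw a (by simp)
    have hb : b ≠ 0 := hu b (by simp)
    have hx' : ∀ c ∈ x, c ≠ 0 := fun c hc => hw c (by simp [hc])
    have hy' : ∀ c ∈ y, c ≠ 0 := fun c hc => hu c (by simp [hc])
    funext d
    rw [qsh_cons_cons,
      Finsupp.sum_add_index' (fun z => zero_smul k (G k m n z))
        (fun z c₁ c₂ => add_smul c₁ c₂ (G k m n z)),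
      Finsupp.sum_add_index' (fun z => zero_smul k (G k m n z))
        (fun z c₁ c₂ => add_smul c₁ c₂ (G k m n z)),
      Finsupp.sum_mapDomain_index (h := fun z c => c • G k m n z)
        (fun z => zero_smul k _) (fun z c₁ c₂ => add_smul c₁ c₂ _),
      Finsupp.sum_mapDomain_index (h := fun z c => c • G k m n z)
        (fun z => zero_smul k _) (fun z c₁ c₂ => add_smul c₁ c₂ _),
      Finsupp.sum_mapDomain_index (h := fun z c => c • G k m n z)
        (fun z => zero_smul k _) (fun z c₁ c₂ => add_smul c₁ c₂ _)]
    simp only [Pi.add_apply, Finsupp.sum_apply', Finsupp.sum, Finset.sum_apply, Pi.smul_apply,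
      smul_eq_mul]
    rw [mulE_eqF hfin hsub,
      term1 hfin hsub ha hb hx' hu (fun n' => ih1 hx' hu n') n d,
      term2 hfin hsub ha hb hw hy' (fun n' => ih2 hw hy' n') n d,
      term3 hfin hsub ha hb hx' hy' (fun n' => ih3 hx' hy' n') n d,
      add_assoc, Finset.sum_filter_add_sum_filter_not, Finset.sum_filter_add_sum_filter_not]
    calc
      ∑ p ∈ (S_fin hfin hsub d).toFinset, G k m n (a :: x) p.1 * G k m n (b :: y) p.2
        = ∑ p ∈ (S_fin hfin hsub d).toFinset,
            ∑ q ∈ (Q_fin hfin hsub ha n p.1).toFinset,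
            ∑ r ∈ (Q_fin hfin hsub hb n p.2).toFinset,
            G k m (q.1 : ℕ) x q.2 * G k m (r.1 : ℕ) y r.2 := by
          refine Finset.sum_congr rfl fun p _ => ?_
          rw [headRecF hfin hsub ha hx' n p.1, headRecF hfin hsub hb hy' n p.2,
            Finset.sum_mul_sum]
      _ = ∑ p ∈ (S_fin hfin hsub d).toFinset,
            ∑ qr ∈ (Q_fin hfin hsub ha n p.1).toFinset ×ˢ (Q_fin hfin hsub hb n p.2).toFinset,
            G k m (qr.1.1 : ℕ) x qr.1.2 * G k m (qr.2.1 : ℕ) y qr.2.2 :=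
          Finset.sum_congr rfl fun p _ => (Finset.sum_product' _ _ _).symm
      _ = ∑ t ∈ (S_fin hfin hsub d).toFinset.sigma fun p =>
            (Q_fin hfin hsub ha n p.1).toFinset ×ˢ (Q_fin hfin hsub hb n p.2).toFinset,
          G k m (t.2.1.1 : ℕ) x t.2.1.2 * G k m (t.2.2.1 : ℕ) y t.2.2.2 :=
          Finset.sum_sigma' _ _ _

end Aux

/-- the product of two monomial multi-quasisymmetric functions
satisfies the quasi-shuffle recursion
`M_{(w_1,…,w_{n_1})} · M_{(u_1,…,u_{n_2})} = M_{(w_1, (w_2,…,w_{n_1}) * u)}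
 + M_{(u_1, w * (u_2,…,u_{n_2}))} + M_{(w_1·u_1, (w_2,…,w_{n_1}) * (u_2,…,u_{n_2}))}`
(with `M` extended linearly). -/
theorem stmt11 (k : Type*) [CommRing k] {E : Type*} [AddCommMonoid E] (m : ℕ)
    (hfin : ∀ e : E, {p : E × E | p.1 + p.2 = e}.Finite)
    (hsub : ∀ a b : E, a ≠ 0 → b ≠ 0 → a + b ≠ 0)
    (w₁ u₁ : Fin m → E) (ws us : List (Fin m → E))
    (hw : ∀ c ∈ w₁ :: ws, c ≠ 0) (hu : ∀ c ∈ u₁ :: us, c ≠ 0) :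
    mulE m (MwE k m (w₁ :: ws)) (MwE k m (u₁ :: us)) =
      ((qsh (k := k) (· + ·) ws (u₁ :: us)).sum fun z cz => cz • MwE k m (w₁ :: z)) +
        ((qsh (k := k) (· + ·) (w₁ :: ws) us).sum fun z cz => cz • MwE k m (u₁ :: z)) +
        ((qsh (k := k) (· + ·) ws us).sum fun z cz => cz • MwE k m ((w₁ + u₁) :: z)) := by
  simp only [MwE_eq_G]
  rw [gen hfin hsub _ _ hw hu 0, qsh_cons_cons,
    Finsupp.sum_add_index' (fun z => zero_smul k (G k m 0 z))
      (fun z c₁ c₂ => add_smul c₁ c₂ (G k m 0 z)),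
    Finsupp.sum_add_index' (fun z => zero_smul k (G k m 0 z))
      (fun z c₁ c₂ => add_smul c₁ c₂ (G k m 0 z)),
    Finsupp.sum_mapDomain_index (h := fun z c => c • G k m 0 z)
      (fun z => zero_smul k _) (fun z c₁ c₂ => add_smul c₁ c₂ _),
    Finsupp.sum_mapDomain_index (h := fun z c => c • G k m 0 z)
      (fun z => zero_smul k _) (fun z c₁ c₂ => add_smul c₁ c₂ _),
    Finsupp.sum_mapDomain_index (h := fun z c => c • G k m 0 z)
      (fun z => zero_smul k _) (fun z c₁ c₂ => add_smul c₁ c₂ _)]
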